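/- arXiv:1207.5469 — 2 statements merged into one kernel-verified Lean document; each statement's English description precedes it below -/
import Mathlib

section
/- The metric dimension of the incidence graph of any projective plane of order q ≥ 3 is at most 4q − 4. -/
open Configuration

variable (P L : Type*) [Membership P L]

/-- The incidence graph of an incidence structure: vertices are points and lines,
with a point adjacent to a line iff it lies on it. -/
def incGraph : SimpleGraph (P ⊕ L) where
  Adj x y := match x, y with
    | .inl p, .inr l => p ∈ l
    | .inr l, .inl p => p ∈ l
    | _, _ => False
  symm := ⟨by rintro (p | l) (p' | l') h <;> simp_all⟩
  loopless := ⟨by rintro (p | l) h <;> simp_all⟩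

/-- A set of vertices is resolving if the ordered distance lists to its elements
distinguish all vertices. -/
def IsResolvingSet (S : Set (P ⊕ L)) : Prop :=
  ∀ x y : P ⊕ L, (∀ s ∈ S, (incGraph P L).dist x s = (incGraph P L).dist y s) → x = y

/-- A vertex `x` is resolved by `S` if no other vertex has the same distance list. -/
def ResolvedBy (S : Set (P ⊕ L)) (x : P ⊕ L) : Prop :=
  ∀ y : P ⊕ L, (∀ s ∈ S, (incGraph P L).dist x s = (incGraph P L).dist y s) → y = x

/-- The metric dimension: the least size of a resolving set. -/
noncomputable def metricDim : ℕ :=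
  sInf {n | ∃ S : Finset (P ⊕ L), S.card = n ∧ IsResolvingSet P L ↑S}

set_option linter.unusedSectionVars false

section Aux
variable {P L}

lemma adj_inl_inr {p : P} {l : L} : (incGraph P L).Adj (Sum.inl p) (Sum.inr l) ↔ p ∈ l := Iff.rfl
lemma adj_inr_inl {p : P} {l : L} : (incGraph P L).Adj (Sum.inr l) (Sum.inl p) ↔ p ∈ l := Iff.rfl
lemma adj_inl_inl {p p' : P} : ¬ (incGraph P L).Adj (Sum.inl p) (Sum.inl p') := fun h => h
lemma adj_inr_inr {l l' : L} : ¬ (incGraph P L).Adj (Sum.inr l) (Sum.inr l') := fun h => h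

lemma incGraph_walk_even : ∀ {x y : P ⊕ L} (w : (incGraph P L).Walk x y),
    (Even w.length ↔ (x.isLeft = y.isLeft)) := by
  intro x y w
  induction w with
  | nil => simp
  | @cons u v z h w ih =>
    rw [SimpleGraph.Walk.length_cons, Nat.even_add_one, ih]
    rcases u with p | l <;> rcases v with p' | l'
    · exact absurd h adj_inl_inl
    · rcases z with q | n <;> simp
    · rcases z with q | n <;> simp
    · exact absurd h adj_inr_inr

section PP
variable [ProjectivePlane P L] [Fintype P] [Fintype L]

lemma exists_mem_line (l : L) : ∃ p : P, p ∈ l := by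
  classical
  have h := ProjectivePlane.pointCount_eq P l
  unfold pointCount at h
  have h2 : 0 < Nat.card {p : P // p ∈ l} := by omega
  obtain ⟨⟨⟨p, hp⟩⟩, -⟩ := Nat.card_pos_iff.mp h2
  exact ⟨p, hp⟩

lemma exists_two_on_line (hq : 3 ≤ ProjectivePlane.order P L) (l : L) (t u : P) :
    ∃ w₁ w₂ : P, (w₁ ∈ l ∧ w₁ ≠ t ∧ w₁ ≠ u) ∧ (w₂ ∈ l ∧ w₂ ≠ t ∧ w₂ ≠ u) ∧ w₁ ≠ w₂ := by
  classical
  have h := ProjectivePlane.pointCount_eq P l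
  unfold pointCount at h
  rw [Nat.card_eq_fintype_card (α := {p : P // p ∈ l}), Fintype.card_subtype] at h
  have h2 : 1 < ((Finset.univ.filter (· ∈ l)) \ {t, u}).card := by
    have h3 := Finset.le_card_sdiff ({t, u} : Finset P) (Finset.univ.filter (· ∈ l))
    have h4 : ({t, u} : Finset P).card ≤ 2 := by
      apply le_trans (Finset.card_insert_le _ _); simp
    omega
  obtain ⟨w₁, hw₁, w₂, hw₂, hne⟩ := Finset.one_lt_card.mp h2
  simp only [Finset.mem_sdiff, Finset.mem_filter, Finset.mem_univ, true_and,
    Finset.mem_insert, Finset.mem_singleton, not_or] at hw₁ hw₂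
  exact ⟨w₁, w₂, ⟨hw₁.1, hw₁.2.1, hw₁.2.2⟩, ⟨hw₂.1, hw₂.2.1, hw₂.2.2⟩, hne⟩

lemma exists_two_through_point (hq : 3 ≤ ProjectivePlane.order P L) (p : P) (s t : L) :
    ∃ m₁ m₂ : L, (p ∈ m₁ ∧ m₁ ≠ s ∧ m₁ ≠ t) ∧ (p ∈ m₂ ∧ m₂ ≠ s ∧ m₂ ≠ t) ∧ m₁ ≠ m₂ := by
  classical
  have h := ProjectivePlane.lineCount_eq L p
  unfold lineCount at h
  rw [Nat.card_eq_fintype_card (α := {m : L // p ∈ m}), Fintype.card_subtype] at h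
  have h2 : 1 < ((Finset.univ.filter (fun m : L => p ∈ m)) \ {s, t}).card := by
    have h3 := Finset.le_card_sdiff ({s, t} : Finset L) (Finset.univ.filter (fun m : L => p ∈ m))
    have h4 : ({s, t} : Finset L).card ≤ 2 := by
      apply le_trans (Finset.card_insert_le _ _); simp
    omega
  obtain ⟨w₁, hw₁, w₂, hw₂, hne⟩ := Finset.one_lt_card.mp h2
  simp only [Finset.mem_sdiff, Finset.mem_filter, Finset.mem_univ, true_and,
    Finset.mem_insert, Finset.mem_singleton, not_or] at hw₁ hw₂
  exact ⟨w₁, w₂, ⟨hw₁.1, hw₁.2.1, hw₁.2.2⟩, ⟨hw₂.1, hw₂.2.1, hw₂.2.2⟩, hne⟩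

lemma dist_inl_inr_mem {p : P} {l : L} (h : p ∈ l) :
    (incGraph P L).dist (Sum.inl p) (Sum.inr l) = 1 :=
  SimpleGraph.dist_eq_one_iff_adj.mpr (adj_inl_inr.mpr h)

lemma dist_inl_inl {p p' : P} (h : p ≠ p') :
    (incGraph P L).dist (Sum.inl p) (Sum.inl p') = 2 := by
  have hl := HasLines.mkLine_ax (L := L) h
  let w : (incGraph P L).Walk (Sum.inl p) (Sum.inl p') :=
    .cons (adj_inl_inr.mpr hl.1) (.cons (adj_inr_inl.mpr hl.2) .nil)
  have hle : (incGraph P L).dist (Sum.inl p) (Sum.inl p') ≤ 2 := by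
    have := SimpleGraph.dist_le w
    simpa [w] using this
  have hr : (incGraph P L).Reachable (Sum.inl p) (Sum.inl p') := ⟨w⟩
  have hne0 : (incGraph P L).dist (Sum.inl p) (Sum.inl p') ≠ 0 := by
    intro h0
    rcases SimpleGraph.dist_eq_zero_iff_eq_or_not_reachable.mp h0 with h1 | h1
    · exact h (Sum.inl.inj h1)
    · exact h1 hr
  obtain ⟨w', hw'⟩ := hr.exists_walk_length_eq_dist
  have heven : Even ((incGraph P L).dist (Sum.inl p) (Sum.inl p')) := by
    rw [← hw']; exact (incGraph_walk_even w').mpr rfl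
  obtain ⟨k, hk⟩ := heven
  omega

lemma dist_inr_inr {l l' : L} (h : l ≠ l') :
    (incGraph P L).dist (Sum.inr l) (Sum.inr l') = 2 := by
  have hl := HasPoints.mkPoint_ax (P := P) h
  let w : (incGraph P L).Walk (Sum.inr l) (Sum.inr l') :=
    .cons (adj_inr_inl.mpr hl.1) (.cons (adj_inl_inr.mpr hl.2) .nil)
  have hle : (incGraph P L).dist (Sum.inr l) (Sum.inr l') ≤ 2 := by
    have := SimpleGraph.dist_le w
    simpa [w] using this
  have hr : (incGraph P L).Reachable (Sum.inr l) (Sum.inr l') := ⟨w⟩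
  have hne0 : (incGraph P L).dist (Sum.inr l) (Sum.inr l') ≠ 0 := by
    intro h0
    rcases SimpleGraph.dist_eq_zero_iff_eq_or_not_reachable.mp h0 with h1 | h1
    · exact h (Sum.inr.inj h1)
    · exact h1 hr
  obtain ⟨w', hw'⟩ := hr.exists_walk_length_eq_dist
  have heven : Even ((incGraph P L).dist (Sum.inr l) (Sum.inr l')) := by
    rw [← hw']; exact (incGraph_walk_even w').mpr rfl
  obtain ⟨k, hk⟩ := heven
  omega

lemma dist_inl_inr_not_mem {p : P} {l : L} (h : p ∉ l) :
    (incGraph P L).dist (Sum.inl p) (Sum.inr l) = 3 := by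
  obtain ⟨x, hx⟩ := exists_mem_line (P := P) l
  have hpx : p ≠ x := fun e => h (e ▸ hx)
  have hm := HasLines.mkLine_ax (L := L) hpx
  let w : (incGraph P L).Walk (Sum.inl p) (Sum.inr l) :=
    .cons (adj_inl_inr.mpr hm.1) (.cons (adj_inr_inl.mpr hm.2) (.cons (adj_inl_inr.mpr hx) .nil))
  have hle : (incGraph P L).dist (Sum.inl p) (Sum.inr l) ≤ 3 := by
    have := SimpleGraph.dist_le w
    simpa [w] using this
  have hr : (incGraph P L).Reachable (Sum.inl p) (Sum.inr l) := ⟨w⟩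
  have hne1 : (incGraph P L).dist (Sum.inl p) (Sum.inr l) ≠ 1 := by
    intro h1
    exact h (adj_inl_inr.mp (SimpleGraph.dist_eq_one_iff_adj.mp h1))
  obtain ⟨w', hw'⟩ := hr.exists_walk_length_eq_dist
  have hodd : ¬ Even ((incGraph P L).dist (Sum.inl p) (Sum.inr l)) := by
    rw [← hw']
    intro he
    simpa using (incGraph_walk_even w').mp he
  rw [Nat.not_even_iff] at hodd
  omega

end PP

end Aux

set_option maxHeartbeats 1000000 in
/-- the metric dimension of a projective plane of order q ≥ 3
is at most 4q - 4. -/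
theorem metricDim_le_of_three_le_order
    {P L : Type*} [Membership P L] [ProjectivePlane P L] [Fintype P] [Fintype L]
    (hq : 3 ≤ ProjectivePlane.order P L) :
    metricDim P L ≤ 4 * ProjectivePlane.order P L - 4 := by
  classical
  obtain ⟨p₁, p₂, p₃, l₁, l₂, l₃, h₁₂, h₁₃, h₂₁, h₂₂, h₂₃, h₃₁, h₃₂, h₃₃⟩ :=
    ProjectivePlane.exists_config (P := P) (L := L)
  set a := l₂ with ha_def
  set b := l₃ with hb_def
  have hab : a ≠ b := fun e => h₃₃ (e ▸ h₃₂)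
  set T := HasPoints.mkPoint (P := P) hab with hT_def
  have hT := HasPoints.mkPoint_ax (P := P) hab
  -- point A on a, A ≠ T
  obtain ⟨A, -, ⟨hAa, hAT, -⟩, -, -⟩ := exists_two_on_line hq a T T
  have hAb : A ∉ b := fun hAb =>
    hAT ((Nondegenerate.eq_or_eq hAa hT.1 hAb hT.2).resolve_right hab)
  -- point B on b, B ≠ T
  obtain ⟨B, -, ⟨hBb, hBT, -⟩, -, -⟩ := exists_two_on_line hq b T T
  have hBa : B ∉ a := fun hBa =>
    hBT ((Nondegenerate.eq_or_eq hBa hT.1 hBb hT.2).resolve_right (by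
      intro e; exact hab e))
  have hABne : A ≠ B := fun e => hAb (e ▸ hBb)
  set ab := HasLines.mkLine (L := L) hABne with hab_def
  have hab_ax := HasLines.mkLine_ax (L := L) hABne
  have habne_a : ab ≠ a := fun e => hBa (e ▸ hab_ax.2)
  have habne_b : ab ≠ b := fun e => hAb (e ▸ hab_ax.1)
  -- line b' through A, distinct from a and ab
  obtain ⟨b', -, ⟨hAb', hb'a, hb'ab⟩, -, -⟩ := exists_two_through_point hq A a ab
  have hTb' : T ∉ b' := fun hT' =>
    hb'a ((Nondegenerate.eq_or_eq hT.1 hAa hT' hAb').resolve_left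
      (fun e => hAT e.symm)).symm
  have hBb' : B ∉ b' := fun hB' =>
    hb'ab ((Nondegenerate.eq_or_eq hAb' hB' hab_ax.1 hab_ax.2).resolve_left hABne)
  have hTab : T ∉ ab := fun hT' => by
    have := (Nondegenerate.eq_or_eq hT.1 hAa hT' hab_ax.1).resolve_left
      (fun e => hAT e.symm)
    exact hBa (this ▸ hab_ax.2)
  have hbb' : b ≠ b' := fun e => hAb (e ▸ hAb')
  set Z := HasPoints.mkPoint (P := P) hbb' with hZ_def
  have hZ := HasPoints.mkPoint_ax (P := P) hbb'
  have hZT : Z ≠ T := fun e => hTb' (e ▸ hZ.2)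
  have hZB : Z ≠ B := fun e => hBb' (e ▸ hZ.2)
  -- the resolving set
  set PPred : P → Prop := fun p => (p ∈ a ∧ p ≠ T ∧ p ≠ A) ∨ (p ∈ b ∧ p ≠ T ∧ p ≠ B)
    with hPPred_def
  set LPred : L → Prop := fun m => (T ∈ m ∧ m ≠ a ∧ m ≠ b) ∨ (A ∈ m ∧ m ≠ a ∧ m ≠ b')
    with hLPred_def
  set SP : Finset P := Finset.univ.filter PPred with hSP_def
  set SL : Finset L := Finset.univ.filter LPred with hSL_def
  set S : Finset (P ⊕ L) := SP.image Sum.inl ∪ SL.image Sum.inr with hS_def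
  have hSinl : ∀ p : P, Sum.inl p ∈ S ↔ PPred p := by
    intro p
    simp [hS_def, hSP_def, hSL_def]
  have hSinr : ∀ m : L, Sum.inr m ∈ S ↔ LPred m := by
    intro m
    simp [hS_def, hSP_def, hSL_def]
  -- resolving
  have hres : IsResolvingSet P L ↑S := by
    intro x y hxy
    have hx : ∀ s ∈ S, (incGraph P L).dist x s = (incGraph P L).dist y s :=
      fun s hs => hxy s (Finset.mem_coe.mpr hs)
    -- a witness point in the set, for the mixed cases
    obtain ⟨w₀, -, ⟨hw₀a, hw₀T, hw₀A⟩, -, -⟩ := exists_two_on_line hq a T A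
    have hw₀PP : PPred w₀ := Or.inl ⟨hw₀a, hw₀T, hw₀A⟩
    have hw₀S : Sum.inl w₀ ∈ S := (hSinl w₀).mpr hw₀PP
    -- mixed case helper
    have hmixed : ∀ (p : P) (m : L),
        (incGraph P L).dist (Sum.inl p) (Sum.inl w₀) ≠
        (incGraph P L).dist (Sum.inr m) (Sum.inl w₀) := by
      intro p m
      have h1 : (incGraph P L).dist (Sum.inl p) (Sum.inl w₀) = 0 ∨
          (incGraph P L).dist (Sum.inl p) (Sum.inl w₀) = 2 := by
        by_cases h : p = w₀
        · left; rw [h]; exact SimpleGraph.dist_self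
        · right; exact dist_inl_inl h
      have h2 : (incGraph P L).dist (Sum.inr m) (Sum.inl w₀) = 1 ∨
          (incGraph P L).dist (Sum.inr m) (Sum.inl w₀) = 3 := by
        rw [SimpleGraph.dist_comm]
        by_cases h : w₀ ∈ m
        · left; exact dist_inl_inr_mem h
        · right; exact dist_inl_inr_not_mem h
      omega
    rcases x with p | m <;> rcases y with p' | m'
    · -- point versus point
      have hpp : p = p' := by
        by_contra hne
        by_cases hp : PPred p
        · have h := hx (Sum.inl p) ((hSinl p).mpr hp)
          rw [SimpleGraph.dist_self, dist_inl_inl (fun e => hne e.symm)] at h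
          omega
        by_cases hp' : PPred p'
        · have h := hx (Sum.inl p') ((hSinl p').mpr hp')
          rw [SimpleGraph.dist_self (G := incGraph P L) (v := Sum.inl p'),
            dist_inl_inl hne] at h
          omega
        -- traces coincide
        have htr : ∀ m : L, LPred m → (p ∈ m ↔ p' ∈ m) := by
          intro m hm
          have h := hx (Sum.inr m) ((hSinr m).mpr hm)
          by_cases h1 : p ∈ m <;> by_cases h2 : p' ∈ m
          · exact iff_of_true h1 h2
          · rw [dist_inl_inr_mem h1, dist_inl_inr_not_mem h2] at h; omega
          · rw [dist_inl_inr_not_mem h1, dist_inl_inr_mem h2] at h; omega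
          · exact iff_of_false h1 h2
        set c := HasLines.mkLine (L := L) hne with hc_def
        have hc := HasLines.mkLine_ax (L := L) hne
        have honep : ∀ m : L, LPred m → p ∈ m → m = c := fun m hm hpm =>
          (Nondegenerate.eq_or_eq hpm ((htr m hm).mp hpm) hc.1 hc.2).resolve_left hne
        have honep' : ∀ m : L, LPred m → p' ∈ m → m = c := fun m hm hpm =>
          (Nondegenerate.eq_or_eq ((htr m hm).mpr hpm) hpm hc.1 hc.2).resolve_left hne
        have hpc : p ∈ c := hc.1
        have hp'c : p' ∈ c := hc.2
        -- characterization of "bad" points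
        have badfun : ∀ x : P, ¬ PPred x → x ∈ c → (∀ m : L, LPred m → x ∈ m → m = c) →
            (x = B ∧ c = ab) ∨ (x ∈ b' ∧ x ≠ A ∧ T ∈ c) := by
          intro x hxPP hxc honex
          by_cases hxa : x ∈ a
          · by_cases hxT : x = T
            · exfalso
              obtain ⟨m₁, m₂, ⟨hm₁T, hm₁a, hm₁b⟩, ⟨hm₂T, hm₂a, hm₂b⟩, hm₁₂⟩ :=
                exists_two_through_point hq T a b
              have e₁ := honex m₁ (Or.inl ⟨hm₁T, hm₁a, hm₁b⟩) (hxT ▸ hm₁T)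
              have e₂ := honex m₂ (Or.inl ⟨hm₂T, hm₂a, hm₂b⟩) (hxT ▸ hm₂T)
              exact hm₁₂ (e₁.trans e₂.symm)
            · by_cases hxA : x = A
              · exfalso
                obtain ⟨m₁, m₂, ⟨hm₁A, hm₁a, hm₁b'⟩, ⟨hm₂A, hm₂a, hm₂b'⟩, hm₁₂⟩ :=
                  exists_two_through_point hq A a b'
                have e₁ := honex m₁ (Or.inr ⟨hm₁A, hm₁a, hm₁b'⟩) (hxA ▸ hm₁A)
                have e₂ := honex m₂ (Or.inr ⟨hm₂A, hm₂a, hm₂b'⟩) (hxA ▸ hm₂A)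
                exact hm₁₂ (e₁.trans e₂.symm)
              · exact absurd (Or.inl ⟨hxa, hxT, hxA⟩) hxPP
          · have hxT : x ≠ T := fun e => hxa (e ▸ hT.1)
            have hxA : x ≠ A := fun e => hxa (e ▸ hAa)
            by_cases hxb : x ∈ b
            · have hxB : x = B := by
                by_contra hxB
                exact hxPP (Or.inr ⟨hxb, hxT, hxB⟩)
              left
              refine ⟨hxB, ?_⟩
              have hLLab : LPred ab :=
                Or.inr ⟨hab_ax.1, habne_a, fun e => hb'ab e.symm⟩
              exact (honex ab hLLab (by rw [hxB]; exact hab_ax.2)).symm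
            · have hmT_ax := HasLines.mkLine_ax (L := L) hxT
              have hmTa : HasLines.mkLine (L := L) hxT ≠ a := fun e => hxa (e ▸ hmT_ax.1)
              have hmTb : HasLines.mkLine (L := L) hxT ≠ b := fun e => hxb (e ▸ hmT_ax.1)
              have hcmT : HasLines.mkLine (L := L) hxT = c :=
                honex _ (Or.inl ⟨hmT_ax.2, hmTa, hmTb⟩) hmT_ax.1
              have hTc : T ∈ c := hcmT ▸ hmT_ax.2
              have hmA_ax := HasLines.mkLine_ax (L := L) hxA
              have hmAa : HasLines.mkLine (L := L) hxA ≠ a := fun e => hxa (e ▸ hmA_ax.1)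
              by_cases hmAb' : HasLines.mkLine (L := L) hxA = b'
              · right
                exact ⟨hmAb' ▸ hmA_ax.1, hxA, hTc⟩
              · exfalso
                have hcmA : HasLines.mkLine (L := L) hxA = c :=
                  honex _ (Or.inr ⟨hmA_ax.2, hmAa, hmAb'⟩) hmA_ax.1
                have hAc : A ∈ c := hcmA ▸ hmA_ax.2
                have := (Nondegenerate.eq_or_eq hTc hAc hT.1 hAa).resolve_left
                  (fun e => hAT e.symm)
                exact hxa (by rw [← this]; exact hxc)
        have hbadp := badfun p hp hpc honep
        have hbadp' := badfun p' hp' hp'c honep'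
        rcases hbadp with ⟨hpB, hcab⟩ | ⟨hpb', hpA, hTc⟩ <;>
          rcases hbadp' with ⟨hp'B, hcab'⟩ | ⟨hp'b', hp'A, hTc'⟩
        · exact hne (hpB.trans hp'B.symm)
        · exact hTab (hcab ▸ hTc')
        · exact hTab (hcab' ▸ hTc)
        · have := (Nondegenerate.eq_or_eq hpc hp'c hpb' hp'b').resolve_left hne
          exact hTb' (this ▸ hTc)
      rw [hpp]
    · -- point versus line
      exact absurd (hx (Sum.inl w₀) hw₀S) (hmixed p m')
    · -- line versus point
      exact absurd (hx (Sum.inl w₀) hw₀S).symm (hmixed p' m)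
    · -- line versus line
      have hmm : m = m' := by
        by_contra hne
        by_cases hm : LPred m
        · have h := hx (Sum.inr m) ((hSinr m).mpr hm)
          rw [SimpleGraph.dist_self, dist_inr_inr (fun e => hne e.symm)] at h
          omega
        by_cases hm' : LPred m'
        · have h := hx (Sum.inr m') ((hSinr m').mpr hm')
          rw [SimpleGraph.dist_self (G := incGraph P L) (v := Sum.inr m'),
            dist_inr_inr hne] at h
          omega
        have htr : ∀ w : P, PPred w → (w ∈ m ↔ w ∈ m') := by
          intro w hw
          have h := hx (Sum.inl w) ((hSinl w).mpr hw)
          rw [SimpleGraph.dist_comm (v := Sum.inl w),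
            SimpleGraph.dist_comm (u := Sum.inr m') (v := Sum.inl w)] at h
          by_cases h1 : w ∈ m <;> by_cases h2 : w ∈ m'
          · exact iff_of_true h1 h2
          · rw [dist_inl_inr_mem h1, dist_inl_inr_not_mem h2] at h; omega
          · rw [dist_inl_inr_not_mem h1, dist_inl_inr_mem h2] at h; omega
          · exact iff_of_false h1 h2
        set c := HasPoints.mkPoint (P := P) hne with hc_def
        have hc := HasPoints.mkPoint_ax (P := P) hne
        have honem : ∀ w : P, PPred w → w ∈ m → w = c := fun w hw hwm =>
          (Nondegenerate.eq_or_eq hwm hc.1 ((htr w hw).mp hwm) hc.2).resolve_right hne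
        have honem' : ∀ w : P, PPred w → w ∈ m' → w = c := fun w hw hwm =>
          (Nondegenerate.eq_or_eq ((htr w hw).mpr hwm) hc.1 hwm hc.2).resolve_right hne
        have badfun : ∀ y : L, ¬ LPred y → c ∈ y → (∀ w : P, PPred w → w ∈ y → w = c) →
            (B ∈ y ∧ T ∉ y ∧ A ∉ y ∧ c ∈ a) ∨ (y = b' ∧ c = Z) := by
          intro y hyLL hcy honey
          by_cases hTy : T ∈ y
          · by_cases hya : y = a
            · exfalso
              obtain ⟨w₁, w₂, ⟨hw₁a, hw₁T, hw₁A⟩, ⟨hw₂a, hw₂T, hw₂A⟩, hw₁₂⟩ :=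
                exists_two_on_line hq a T A
              have e₁ := honey w₁ (Or.inl ⟨hw₁a, hw₁T, hw₁A⟩) (by rw [hya]; exact hw₁a)
              have e₂ := honey w₂ (Or.inl ⟨hw₂a, hw₂T, hw₂A⟩) (by rw [hya]; exact hw₂a)
              exact hw₁₂ (e₁.trans e₂.symm)
            · by_cases hyb : y = b
              · exfalso
                obtain ⟨w₁, w₂, ⟨hw₁b, hw₁T, hw₁B⟩, ⟨hw₂b, hw₂T, hw₂B⟩, hw₁₂⟩ :=
                  exists_two_on_line hq b T B
                have e₁ := honey w₁ (Or.inr ⟨hw₁b, hw₁T, hw₁B⟩) (by rw [hyb]; exact hw₁b)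
                have e₂ := honey w₂ (Or.inr ⟨hw₂b, hw₂T, hw₂B⟩) (by rw [hyb]; exact hw₂b)
                exact hw₁₂ (e₁.trans e₂.symm)
              · exact absurd (Or.inl ⟨hTy, hya, hyb⟩) hyLL
          · have hya : y ≠ a := fun e => hTy (e ▸ hT.1)
            have hyb : y ≠ b := fun e => hTy (e ▸ hT.2)
            by_cases hAy : A ∈ y
            · have hyb' : y = b' := by
                by_contra hyb'
                exact hyLL (Or.inr ⟨hAy, hya, hyb'⟩)
              right
              refine ⟨hyb', ?_⟩
              have hZy : Z ∈ y := by rw [hyb']; exact hZ.2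
              exact (honey Z (Or.inr ⟨hZ.1, hZT, hZB⟩) hZy).symm
            · left
              have hay : a ≠ y := fun e => hya e.symm
              have hPa_ax := HasPoints.mkPoint_ax (P := P) hay
              have hPaT : HasPoints.mkPoint (P := P) hay ≠ T := fun e => hTy (e ▸ hPa_ax.2)
              have hPaA : HasPoints.mkPoint (P := P) hay ≠ A := fun e => hAy (e ▸ hPa_ax.2)
              have hPac : HasPoints.mkPoint (P := P) hay = c :=
                honey _ (Or.inl ⟨hPa_ax.1, hPaT, hPaA⟩) hPa_ax.2
              have hca : c ∈ a := hPac ▸ hPa_ax.1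
              have hby : b ≠ y := fun e => hyb e.symm
              have hPb_ax := HasPoints.mkPoint_ax (P := P) hby
              have hPbT : HasPoints.mkPoint (P := P) hby ≠ T := fun e => hTy (e ▸ hPb_ax.2)
              have hPbB : HasPoints.mkPoint (P := P) hby = B := by
                by_contra hPbB
                have hPbc : HasPoints.mkPoint (P := P) hby = c :=
                  honey _ (Or.inr ⟨hPb_ax.1, hPbT, hPbB⟩) hPb_ax.2
                have hcb : c ∈ b := hPbc ▸ hPb_ax.1
                have := (Nondegenerate.eq_or_eq hca hT.1 hcb hT.2).resolve_right hab
                exact hTy (by rw [hT_def, ← this]; exact hcy)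
              exact ⟨hPbB ▸ hPb_ax.2, hTy, hAy, hca⟩
        have hbadm := badfun m hm hc.1 honem
        have hbadm' := badfun m' hm' hc.2 honem'
        rcases hbadm with ⟨hBm, hTm, hAm, hca⟩ | ⟨hmb', hcZ⟩ <;>
          rcases hbadm' with ⟨hBm', hTm', hAm', hca'⟩ | ⟨hm'b', hcZ'⟩
        · have := (Nondegenerate.eq_or_eq hBm hc.1 hBm' hc.2).resolve_right hne
          exact hBa (this ▸ hca)
        · -- m is the B-type line, m' = b', c = Z
          have hZa : Z ∈ a := by rw [← hcZ']; exact hca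
          have := (Nondegenerate.eq_or_eq hZa hAa hZ.2 hAb').resolve_right
            (fun e => hb'a e.symm)
          exact hAb (by rw [← this]; exact hZ.1)
        · have hZa : Z ∈ a := by rw [← hcZ]; exact hca'
          have := (Nondegenerate.eq_or_eq hZa hAa hZ.2 hAb').resolve_right
            (fun e => hb'a e.symm)
          exact hAb (by rw [← this]; exact hZ.1)
        · exact hne (hmb'.trans hm'b'.symm)
      rw [hmm]
  -- cardinality bound
  have hcard : S.card ≤ 4 * ProjectivePlane.order P L - 4 := by
    set q := ProjectivePlane.order P L with hq_def
    have hFa : (Finset.univ.filter (· ∈ a) : Finset P).card = q + 1 := by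
      have h := ProjectivePlane.pointCount_eq P a
      unfold pointCount at h
      rw [Nat.card_eq_fintype_card (α := {p : P // p ∈ a}), Fintype.card_subtype] at h
      exact h
    have hFb : (Finset.univ.filter (· ∈ b) : Finset P).card = q + 1 := by
      have h := ProjectivePlane.pointCount_eq P b
      unfold pointCount at h
      rw [Nat.card_eq_fintype_card (α := {p : P // p ∈ b}), Fintype.card_subtype] at h
      exact h
    have hFT : (Finset.univ.filter (fun m : L => T ∈ m)).card = q + 1 := by
      have h := ProjectivePlane.lineCount_eq L T
      unfold lineCount at h
      rw [Nat.card_eq_fintype_card (α := {m : L // T ∈ m}), Fintype.card_subtype] at h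
      exact h
    have hFA : (Finset.univ.filter (fun m : L => A ∈ m)).card = q + 1 := by
      have h := ProjectivePlane.lineCount_eq L A
      unfold lineCount at h
      rw [Nat.card_eq_fintype_card (α := {m : L // A ∈ m}), Fintype.card_subtype] at h
      exact h
    have hSPcard : SP.card ≤ 2 * q - 2 := by
      have hsub : SP ⊆ ((Finset.univ.filter (· ∈ a)) \ {T, A}) ∪
          ((Finset.univ.filter (· ∈ b)) \ {T, B}) := by
        intro p hp
        rw [hSP_def, Finset.mem_filter] at hp
        rcases hp.2 with ⟨h1, h2, h3⟩ | ⟨h1, h2, h3⟩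
        · apply Finset.mem_union_left
          simp [h1, h2, h3]
        · apply Finset.mem_union_right
          simp [h1, h2, h3]
      have hsub1 : ({T, A} : Finset P) ⊆ Finset.univ.filter (· ∈ a) := by
        intro x hx
        simp only [Finset.mem_insert, Finset.mem_singleton] at hx
        rcases hx with rfl | rfl <;>
          simp only [Finset.mem_filter, Finset.mem_univ, true_and]
        · exact hT.1
        · exact hAa
      have hsub2 : ({T, B} : Finset P) ⊆ Finset.univ.filter (· ∈ b) := by
        intro x hx
        simp only [Finset.mem_insert, Finset.mem_singleton] at hx
        rcases hx with rfl | rfl <;>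
          simp only [Finset.mem_filter, Finset.mem_univ, true_and]
        · exact hT.2
        · exact hBb
      have hc1 : ({T, A} : Finset P).card ≤ 2 := by
        apply le_trans (Finset.card_insert_le _ _); simp
      have hc2 : ({T, B} : Finset P).card ≤ 2 := by
        apply le_trans (Finset.card_insert_le _ _); simp
      have hc1' : 1 ≤ ({T, A} : Finset P).card := Finset.card_pos.mpr ⟨T, by simp⟩
      have hc1'' : ({T, A} : Finset P).card = 2 := by
        rw [Finset.card_insert_of_notMem
          (by simp only [Finset.mem_singleton]; exact fun e => hAT e.symm)]
        simp
      have hc2'' : ({T, B} : Finset P).card = 2 := by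
        rw [Finset.card_insert_of_notMem
          (by simp only [Finset.mem_singleton]; exact fun e => hBT e.symm)]
        simp
      have h1 := Finset.card_sdiff_of_subset hsub1
      have h2 := Finset.card_sdiff_of_subset hsub2
      rw [hFa, hc1''] at h1
      rw [hFb, hc2''] at h2
      have h3 := Finset.card_le_card hsub
      have h4 := Finset.card_union_le ((Finset.univ.filter (· ∈ a)) \ ({T, A} : Finset P))
        ((Finset.univ.filter (· ∈ b)) \ ({T, B} : Finset P))
      omega
    have hSLcard : SL.card ≤ 2 * q - 2 := by
      have hsub : SL ⊆ ((Finset.univ.filter (fun m : L => T ∈ m)) \ {a, b}) ∪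
          ((Finset.univ.filter (fun m : L => A ∈ m)) \ {a, b'}) := by
        intro m hm
        rw [hSL_def, Finset.mem_filter] at hm
        rcases hm.2 with ⟨h1, h2, h3⟩ | ⟨h1, h2, h3⟩
        · apply Finset.mem_union_left
          simp [h1, h2, h3]
        · apply Finset.mem_union_right
          simp [h1, h2, h3]
      have hsub1 : ({a, b} : Finset L) ⊆ Finset.univ.filter (fun m : L => T ∈ m) := by
        intro x hx
        simp only [Finset.mem_insert, Finset.mem_singleton] at hx
        rcases hx with rfl | rfl <;>
          simp only [Finset.mem_filter, Finset.mem_univ, true_and]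
        · exact hT.1
        · exact hT.2
      have hsub2 : ({a, b'} : Finset L) ⊆ Finset.univ.filter (fun m : L => A ∈ m) := by
        intro x hx
        simp only [Finset.mem_insert, Finset.mem_singleton] at hx
        rcases hx with rfl | rfl <;>
          simp only [Finset.mem_filter, Finset.mem_univ, true_and]
        · exact hAa
        · exact hAb'
      have hc1'' : ({a, b} : Finset L).card = 2 := by
        rw [Finset.card_insert_of_notMem
          (by simp only [Finset.mem_singleton]; exact hab)]
        simp
      have hc2'' : ({a, b'} : Finset L).card = 2 := by
        rw [Finset.card_insert_of_notMem
          (by simp only [Finset.mem_singleton]; exact fun e => hb'a e.symm)]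
        simp
      have h1 := Finset.card_sdiff_of_subset hsub1
      have h2 := Finset.card_sdiff_of_subset hsub2
      rw [hFT, hc1''] at h1
      rw [hFA, hc2''] at h2
      have h3 := Finset.card_le_card hsub
      have h4 := Finset.card_union_le
        ((Finset.univ.filter (fun m : L => T ∈ m)) \ ({a, b} : Finset L))
        ((Finset.univ.filter (fun m : L => A ∈ m)) \ ({a, b'} : Finset L))
      omega
    have h5 := Finset.card_union_le (SP.image (Sum.inl : P → P ⊕ L))
      (SL.image (Sum.inr : L → P ⊕ L))
    have h6 := Finset.card_image_le (s := SP) (f := (Sum.inl : P → P ⊕ L))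
    have h7 := Finset.card_image_le (s := SL) (f := (Sum.inr : L → P ⊕ L))
    have h8 : S.card ≤ SP.card + SL.card := by
      rw [hS_def]; omega
    omega
  exact le_trans (Nat.sInf_le ⟨S, rfl, hres⟩) hcard
end

section
/- If S = P_S ∪ L_S is a resolving set of a projective plane of order q with |S| ≤ 4q − 4, then 2q − 5 ≤ |P_S| ≤ 2q + 1 and 2q − 5 ≤ |L_S| ≤ 2q + 1. -/
open Configuration

variable (P L : Type*) [Membership P L]

/-! ### Auxiliary counting lemma -/

set_option linter.unusedSectionVars false

/-- Generic counting lemma: if the elements of `T` (thought of as lines) separate the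
elements of `V` (points) outside `A`, then `T` cannot be too small. -/
lemma count_lemma {V W : Type*} [Fintype V] [Fintype W] (R : V → W → Prop) (q : ℕ)
    (A : Finset V) (T : Finset W)
    (hV : Fintype.card V = q ^ 2 + q + 1)
    (hW : ∀ w : W, Nat.card {v // R v w} = q + 1)
    (hsep : ∀ x ∉ A, ∀ y ∉ A, x ≠ y → ∃ w ∈ T, ¬(R x w ↔ R y w))
    (hc : A.card + T.card + 4 ≤ 4 * q) :
    2 * q - 5 ≤ T.card := by
  classical
  set t := T.card with ht
  set k : V → ℕ := fun v => (T.filter fun w => R v w).card with hk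
  set U : Finset V := Finset.univ.filter (fun v => v ∉ A ∧ k v = 0) with hU
  set B : Finset V := Finset.univ.filter (fun v => v ∉ A ∧ k v = 1) with hB
  set C : Finset V := Finset.univ.filter (fun v => v ∉ A ∧ 2 ≤ k v) with hC
  -- |U| ≤ 1
  have hUcard : U.card ≤ 1 := by
    rw [Finset.card_le_one]
    intro a ha b hb
    by_contra hab
    simp only [hU, Finset.mem_filter] at ha hb
    obtain ⟨w, hwT, hw⟩ := hsep a ha.2.1 b hb.2.1 hab
    have hka : (T.filter fun w => R a w) = ∅ := Finset.card_eq_zero.mp ha.2.2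
    have hkb : (T.filter fun w => R b w) = ∅ := Finset.card_eq_zero.mp hb.2.2
    have h1 : ¬ R a w := fun h => by
      have : w ∈ (T.filter fun w => R a w) := Finset.mem_filter.mpr ⟨hwT, h⟩
      simp [hka] at this
    have h2 : ¬ R b w := fun h => by
      have : w ∈ (T.filter fun w => R b w) := Finset.mem_filter.mpr ⟨hwT, h⟩
      simp [hkb] at this
    exact hw ⟨fun h => absurd h h1, fun h => absurd h h2⟩
  -- |B| ≤ t
  have hBcard : B.card ≤ t := by
    rcases isEmpty_or_nonempty W with hW0 | hW0
    · have hT0 : T = ∅ := Finset.eq_empty_of_isEmpty T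
      have : B = ∅ := by
        rw [Finset.eq_empty_iff_forall_notMem]
        intro v hv
        simp only [hB, Finset.mem_filter, hk, hT0, Finset.filter_empty,
          Finset.card_empty] at hv
        exact absurd hv.2.2 (by simp)
      simp [this]
    · set f : V → W := fun v =>
        if h : (T.filter fun w => R v w).Nonempty then h.choose else Classical.arbitrary W with hf
      have hfmem : ∀ v ∈ B, f v ∈ (T.filter fun w => R v w) := by
        intro v hv
        simp only [hB, Finset.mem_filter] at hv
        have hrfl : (T.filter fun w => R v w).card = k v := rfl
        have hne : (T.filter fun w => R v w).Nonempty :=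
          Finset.card_pos.mp (by omega)
        simp only [hf, dif_pos hne]
        exact hne.choose_spec
      have huniq : ∀ v ∈ B, ∀ w ∈ T, R v w → w = f v := by
        intro v hv w hwT hw
        have hv' := Finset.mem_filter.mp hv
        have hrfl : (T.filter fun w => R v w).card = k v := rfl
        have h1 : w ∈ (T.filter fun w => R v w) := Finset.mem_filter.mpr ⟨hwT, hw⟩
        exact Finset.card_le_one.mp (by omega) _ h1 _ (hfmem v hv)
      have hinj : Set.InjOn f B := by
        intro u hu v hv hfe
        by_contra huv
        have huA : u ∉ A := (Finset.mem_filter.mp hu).2.1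
        have hvA : v ∉ A := (Finset.mem_filter.mp hv).2.1
        obtain ⟨w, hwT, hw⟩ := hsep u huA v hvA huv
        rcases Classical.em (R u w) with h1 | h1
        · have hwfu : w = f u := huniq u hu w hwT h1
          have : R v (f v) := (Finset.mem_filter.mp (hfmem v hv)).2
          exact hw ⟨fun _ => by rwa [hwfu, hfe], fun _ => h1⟩
        · have h2 : R v w := by
            by_contra h2
            exact hw ⟨fun h => absurd h h1, fun h => absurd h h2⟩
          have hwfv : w = f v := huniq v hv w hwT h2
          have : R u (f u) := (Finset.mem_filter.mp (hfmem u hu)).2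
          exact hw ⟨fun h => absurd h h1, fun _ => by rwa [hwfv, ← hfe]⟩
      calc B.card = (B.image f).card := (Finset.card_image_of_injOn hinj).symm
        _ ≤ T.card := Finset.card_le_card (by
            intro w hw
            obtain ⟨v, hv, rfl⟩ := Finset.mem_image.mp hw
            exact (Finset.mem_filter.mp (hfmem v hv)).1)
  -- incidence double count
  have hsum : ∑ v : V, k v = t * (q + 1) := by
    simp only [hk, Finset.card_filter]
    rw [Finset.sum_comm]
    have : ∀ w ∈ T, (∑ v : V, if R v w then 1 else 0) = q + 1 := by
      intro w _
      rw [← Finset.card_filter]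
      have := hW w
      rw [Nat.card_eq_fintype_card, Fintype.card_subtype] at this
      exact this
    rw [Finset.sum_congr rfl this, Finset.sum_const, smul_eq_mul, ht]
  have hBC : B.card + 2 * C.card ≤ t * (q + 1) := by
    have hdisj : Disjoint B C := by
      rw [Finset.disjoint_left]
      intro a ha hb
      simp only [hB, hC, Finset.mem_filter] at ha hb
      omega
    have h1 : ∑ v ∈ B ∪ C, k v ≤ ∑ v : V, k v :=
      Finset.sum_le_sum_of_subset (Finset.subset_univ _)
    rw [Finset.sum_union hdisj] at h1
    have h2 : B.card ≤ ∑ v ∈ B, k v := by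
      rw [Finset.card_eq_sum_ones]
      apply Finset.sum_le_sum
      intro v hv
      have := (Finset.mem_filter.mp hv).2.2
      omega
    have h3 : 2 * C.card ≤ ∑ v ∈ C, k v := by
      rw [Finset.card_eq_sum_ones, Finset.mul_sum]
      apply Finset.sum_le_sum
      intro v hv
      have := (Finset.mem_filter.mp hv).2.2
      omega
    omega
  -- cover
  have hcover : q ^ 2 + q + 1 ≤ A.card + U.card + B.card + C.card := by
    have hsub : Finset.univ ⊆ A ∪ U ∪ B ∪ C := by
      intro v _
      by_cases hA : v ∈ A
      · simp [hA]
      · simp only [Finset.mem_union, hU, hB, hC, Finset.mem_filter, Finset.mem_univ, true_and]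
        rcases Nat.lt_or_ge (k v) 2 with h | h
        · have h' : k v = 0 ∨ k v = 1 := by omega
          rcases h' with h' | h'
          · exact Or.inl (Or.inl (Or.inr ⟨hA, h'⟩))
          · exact Or.inl (Or.inr ⟨hA, h'⟩)
        · exact Or.inr ⟨hA, h⟩
    calc q ^ 2 + q + 1 = Fintype.card V := hV.symm
      _ = Finset.univ.card := Finset.card_univ.symm
      _ ≤ (A ∪ U ∪ B ∪ C).card := Finset.card_le_card hsub
      _ ≤ (A ∪ U ∪ B).card + C.card := Finset.card_union_le _ _
      _ ≤ (A ∪ U).card + B.card + C.card := by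
          have := Finset.card_union_le (A ∪ U) B; omega
      _ ≤ A.card + U.card + B.card + C.card := by
          have := Finset.card_union_le A U; omega
  -- final arithmetic
  by_contra hT
  push_neg at hT
  have hmul : t * q + 6 * q ≤ 2 * q ^ 2 := by
    have h6 : t + 6 ≤ 2 * q := by omega
    have := Nat.mul_le_mul_right q h6
    nlinarith
  have hBC' : B.card + 2 * C.card ≤ t * q + t := by
    rw [Nat.mul_add, Nat.mul_one] at hBC; exact hBC
  linarith [hcover, hUcard, hBcard, hBC', hc, hmul]

/-! ### Distances in the incidence graph -/

variable {P L}

lemma incGraph_adj_lr {p : P} {l : L} : (incGraph P L).Adj (.inl p) (.inr l) ↔ p ∈ l := Iff.rfl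
lemma incGraph_adj_rl {p : P} {l : L} : (incGraph P L).Adj (.inr l) (.inl p) ↔ p ∈ l := Iff.rfl
lemma incGraph_not_adj_ll {p p' : P} : ¬ (incGraph P L).Adj (.inl p) (.inl p') := fun h => h
lemma incGraph_not_adj_rr {l l' : L} : ¬ (incGraph P L).Adj (.inr l) (.inr l') := fun h => h

/-- There is no walk of length 2 between a point and a line. -/
lemma incGraph_no_walk_two {p : P} {l : L}
    (w : (incGraph P L).Walk (.inl p) (.inr l)) : w.length ≠ 2 := by
  cases w with
  | cons h w' =>
    rename_i v
    cases v with
    | inl p' => exact absurd h incGraph_not_adj_ll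
    | inr m =>
      cases w' with
      | nil => simp
      | cons h2 w'' =>
        rename_i v2
        cases v2 with
        | inr l' => exact absurd h2 incGraph_not_adj_rr
        | inl r =>
          intro hlen
          simp only [SimpleGraph.Walk.length_cons] at hlen
          have h0 : w''.length = 0 := by omega
          have := SimpleGraph.Walk.eq_of_length_eq_zero h0
          exact absurd this (by simp)

variable [ProjectivePlane P L] [Fintype P] [Fintype L]

open HasLines (mkLine mkLine_ax) in
lemma incGraph_dist_ll {p p' : P} (h : p ≠ p') :
    (incGraph P L).dist (.inl p) (.inl p') = 2 := by
  obtain ⟨hm1, hm2⟩ := mkLine_ax (L := L) h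
  let w : (incGraph P L).Walk (.inl p) (.inl p') :=
    (SimpleGraph.Walk.cons (incGraph_adj_lr.mpr hm1)
      (SimpleGraph.Walk.cons (incGraph_adj_rl.mpr hm2) SimpleGraph.Walk.nil))
  have hle : (incGraph P L).dist (.inl p) (.inl p') ≤ 2 := by
    simpa [w] using (incGraph P L).dist_le w
  have hne0 : (incGraph P L).dist (.inl p) (.inl p') ≠ 0 :=
    SimpleGraph.dist_ne_zero_iff_ne_and_reachable.mpr ⟨by simp [h], ⟨w⟩⟩
  have hne1 : (incGraph P L).dist (.inl p) (.inl p') ≠ 1 :=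
    fun h1 => incGraph_not_adj_ll (SimpleGraph.dist_eq_one_iff_adj.mp h1)
  omega

open HasPoints (mkPoint mkPoint_ax) in
lemma incGraph_dist_rr {l l' : L} (h : l ≠ l') :
    (incGraph P L).dist (.inr l) (.inr l') = 2 := by
  obtain ⟨hm1, hm2⟩ := mkPoint_ax (P := P) h
  let w : (incGraph P L).Walk (.inr l) (.inr l') :=
    (SimpleGraph.Walk.cons (incGraph_adj_rl.mpr hm1)
      (SimpleGraph.Walk.cons (incGraph_adj_lr.mpr hm2) SimpleGraph.Walk.nil))
  have hle : (incGraph P L).dist (.inr l) (.inr l') ≤ 2 := by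
    simpa [w] using (incGraph P L).dist_le w
  have hne0 : (incGraph P L).dist (.inr l) (.inr l') ≠ 0 :=
    SimpleGraph.dist_ne_zero_iff_ne_and_reachable.mpr ⟨by simp [h], ⟨w⟩⟩
  have hne1 : (incGraph P L).dist (.inr l) (.inr l') ≠ 1 :=
    fun h1 => incGraph_not_adj_rr (SimpleGraph.dist_eq_one_iff_adj.mp h1)
  omega

lemma incGraph_dist_lr_mem {p : P} {l : L} (h : p ∈ l) :
    (incGraph P L).dist (.inl p) (.inr l) = 1 :=
  SimpleGraph.dist_eq_one_iff_adj.mpr (incGraph_adj_lr.mpr h)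

open HasLines (mkLine mkLine_ax) in
lemma incGraph_dist_lr_not_mem {p : P} {l : L} (h : p ∉ l) :
    (incGraph P L).dist (.inl p) (.inr l) = 3 := by
  have hpc : 0 < Nat.card {r : P // r ∈ l} := by
    have := ProjectivePlane.pointCount_eq P l
    rw [pointCount] at this
    omega
  obtain ⟨r, hr⟩ := (Nat.card_pos_iff.mp hpc).1
  have hpr : p ≠ r := fun he => h (he ▸ hr)
  obtain ⟨hm1, hm2⟩ := mkLine_ax (L := L) hpr
  let w : (incGraph P L).Walk (.inl p) (.inr l) :=
    (SimpleGraph.Walk.cons (incGraph_adj_lr.mpr hm1)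
      (SimpleGraph.Walk.cons (incGraph_adj_rl.mpr hm2)
        (SimpleGraph.Walk.cons (incGraph_adj_lr.mpr hr) SimpleGraph.Walk.nil)))
  have hle : (incGraph P L).dist (.inl p) (.inr l) ≤ 3 := by
    simpa [w] using (incGraph P L).dist_le w
  have hre : (incGraph P L).Reachable (.inl p) (.inr l) := ⟨w⟩
  have hne0 : (incGraph P L).dist (.inl p) (.inr l) ≠ 0 :=
    SimpleGraph.dist_ne_zero_iff_ne_and_reachable.mpr ⟨by simp, hre⟩
  have hne1 : (incGraph P L).dist (.inl p) (.inr l) ≠ 1 :=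
    fun h1 => h (SimpleGraph.dist_eq_one_iff_adj.mp h1)
  have hne2 : (incGraph P L).dist (.inl p) (.inr l) ≠ 2 := by
    intro h2
    obtain ⟨w', hw'⟩ := hre.exists_walk_length_eq_dist
    exact incGraph_no_walk_two w' (hw'.trans h2)
  omega

lemma incGraph_dist_rl_mem {p : P} {l : L} (h : p ∈ l) :
    (incGraph P L).dist (.inr l) (.inl p) = 1 := by
  rw [SimpleGraph.dist_comm]; exact incGraph_dist_lr_mem h

lemma incGraph_dist_rl_not_mem {p : P} {l : L} (h : p ∉ l) :
    (incGraph P L).dist (.inr l) (.inl p) = 3 := by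
  rw [SimpleGraph.dist_comm]; exact incGraph_dist_lr_not_mem h

/-! ### Separation lemmas -/

lemma sep_points (S : Set (P ⊕ L)) (hS : IsResolvingSet P L S) {x y : P}
    (hx : Sum.inl x ∉ S) (hy : Sum.inl y ∉ S) (hxy : x ≠ y) :
    ∃ l : L, Sum.inr l ∈ S ∧ ¬(x ∈ l ↔ y ∈ l) := by
  by_contra hcon
  push_neg at hcon
  apply hxy
  have hkey : (Sum.inl x : P ⊕ L) = Sum.inl y := by
    apply hS (Sum.inl x) (Sum.inl y)
    intro s hs
    match s with
    | Sum.inl p =>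
        have hpx : x ≠ p := fun h => hx (h ▸ hs)
        have hpy : y ≠ p := fun h => hy (h ▸ hs)
        rw [incGraph_dist_ll hpx, incGraph_dist_ll hpy]
    | Sum.inr l =>
        have hiff := hcon l hs
        by_cases hxl : x ∈ l
        · rw [incGraph_dist_lr_mem hxl, incGraph_dist_lr_mem (hiff.mp hxl)]
        · rw [incGraph_dist_lr_not_mem hxl,
            incGraph_dist_lr_not_mem (fun h => hxl (hiff.mpr h))]
  exact Sum.inl_injective hkey

lemma sep_lines (S : Set (P ⊕ L)) (hS : IsResolvingSet P L S) {x y : L}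
    (hx : Sum.inr x ∉ S) (hy : Sum.inr y ∉ S) (hxy : x ≠ y) :
    ∃ p : P, Sum.inl p ∈ S ∧ ¬(p ∈ x ↔ p ∈ y) := by
  by_contra hcon
  push_neg at hcon
  apply hxy
  have hkey : (Sum.inr x : P ⊕ L) = Sum.inr y := by
    apply hS (Sum.inr x) (Sum.inr y)
    intro s hs
    match s with
    | Sum.inr l =>
        have hlx : x ≠ l := fun h => hx (h ▸ hs)
        have hly : y ≠ l := fun h => hy (h ▸ hs)
        rw [incGraph_dist_rr hlx, incGraph_dist_rr hly]
    | Sum.inl p =>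
        have hiff := hcon p hs
        by_cases hpx : p ∈ x
        · rw [incGraph_dist_rl_mem hpx, incGraph_dist_rl_mem (hiff.mp hpx)]
        · rw [incGraph_dist_rl_not_mem hpx,
            incGraph_dist_rl_not_mem (fun h => hpx (hiff.mpr h))]
  exact Sum.inr_injective hkey

/-! ### Main theorem -/

/-- if S is a resolving set of a projective plane of order q with
|S| ≤ 4q - 4, then 2q - 5 ≤ |P_S| ≤ 2q + 1 and 2q - 5 ≤ |L_S| ≤ 2q + 1. -/
theorem resolvingSet_point_line_part_bounds
    {P L : Type*} [Membership P L] [ProjectivePlane P L] [Fintype P] [Fintype L]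
    (S : Set (P ⊕ L)) (hS : IsResolvingSet P L S)
    (hcard : S.ncard ≤ 4 * ProjectivePlane.order P L - 4) :
    (2 * ProjectivePlane.order P L - 5 ≤ ({p : P | Sum.inl p ∈ S}).ncard ∧
      ({p : P | Sum.inl p ∈ S}).ncard ≤ 2 * ProjectivePlane.order P L + 1) ∧
    (2 * ProjectivePlane.order P L - 5 ≤ ({l : L | Sum.inr l ∈ S}).ncard ∧
      ({l : L | Sum.inr l ∈ S}).ncard ≤ 2 * ProjectivePlane.order P L + 1) := by
  classical
  set q := ProjectivePlane.order P L with hq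
  have hq2 : 2 ≤ q := ProjectivePlane.one_lt_order P L
  set AP : Finset P := Finset.univ.filter (fun p => Sum.inl p ∈ S) with hAP
  set AL : Finset L := Finset.univ.filter (fun l => Sum.inr l ∈ S) with hAL
  have hPS : ({p : P | Sum.inl p ∈ S}).ncard = AP.card := by
    rw [Set.ncard_eq_toFinset_card', hAP]
    congr 1
    ext p
    simp
  have hLS : ({l : L | Sum.inr l ∈ S}).ncard = AL.card := by
    rw [Set.ncard_eq_toFinset_card', hAL]
    congr 1
    ext l
    simp
  have hsplit : S.ncard = AP.card + AL.card := by
    rw [Set.ncard_eq_toFinset_card']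
    have h1 : AP.map ⟨Sum.inl, Sum.inl_injective⟩ ∪ AL.map ⟨Sum.inr, Sum.inr_injective⟩
        = S.toFinset := by
      ext x
      cases x <;> simp [hAP, hAL]
    have hdisj : Disjoint (AP.map ⟨Sum.inl, Sum.inl_injective⟩)
        (AL.map ⟨Sum.inr, Sum.inr_injective⟩) := by
      rw [Finset.disjoint_left]
      rintro x hx hy
      simp only [Finset.mem_map, Function.Embedding.coeFn_mk] at hx hy
      obtain ⟨a, -, rfl⟩ := hx
      obtain ⟨b, -, hb⟩ := hy
      exact absurd hb (by simp)
    rw [← h1, Finset.card_union_of_disjoint hdisj, Finset.card_map, Finset.card_map]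
  have hc4 : AP.card + AL.card + 4 ≤ 4 * q := by omega
  have hLlow : 2 * q - 5 ≤ AL.card := by
    apply count_lemma (fun (p : P) (l : L) => p ∈ l) q AP AL
    · exact ProjectivePlane.card_points P L
    · intro l
      exact ProjectivePlane.pointCount_eq P l
    · intro x hx y hy hxy
      have hx' : Sum.inl x ∉ S := by simpa [hAP] using hx
      have hy' : Sum.inl y ∉ S := by simpa [hAP] using hy
      obtain ⟨l, hl1, hl2⟩ := sep_points S hS hx' hy' hxy
      exact ⟨l, by simp [hAL, hl1], hl2⟩
    · exact hc4
  have hPlow : 2 * q - 5 ≤ AP.card := by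
    apply count_lemma (fun (l : L) (p : P) => p ∈ l) q AL AP
    · exact ProjectivePlane.card_lines P L
    · intro p
      exact ProjectivePlane.lineCount_eq L p
    · intro x hx y hy hxy
      have hx' : Sum.inr x ∉ S := by simpa [hAL] using hx
      have hy' : Sum.inr y ∉ S := by simpa [hAL] using hy
      obtain ⟨p, hp1, hp2⟩ := sep_lines S hS hx' hy' hxy
      exact ⟨p, by simp [hAP, hp1], hp2⟩
    · omega
  rw [hPS, hLS]
  refine ⟨⟨hPlow, ?_⟩, hLlow, ?_⟩ <;> omega
end
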